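/- For every integer p ≥ 2, the polynomial u(τ) = (1−τ)^{p+2}(1+τ)^{p−2} satisfies the homogeneous Bianchi transport equation in the sector q = p for the component a₀, i.e. (1−τ²)·u''(τ) + (4 + 2(p−1)τ)·u'(τ) + 2p·u(τ) = 0 for all real τ. -/

import Mathlib

lemma hA (n : ℕ) (t : ℝ) : HasDerivAt (fun s : ℝ => (1 - s) ^ n) (-(n : ℝ) * (1 - t) ^ (n - 1)) t := by
  have := ((hasDerivAt_id t).const_sub 1).fun_pow n
  simp only [id_eq] at this
  exact this.congr_deriv (by ring)

lemma hB (n : ℕ) (t : ℝ) : HasDerivAt (fun s : ℝ => (1 + s) ^ n) ((n : ℝ) * (1 + t) ^ (n - 1)) t := by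
  have := ((hasDerivAt_id t).const_add 1).fun_pow n
  simp only [id_eq] at this
  exact this.congr_deriv (by ring)

lemma hf (a b : ℕ) (t : ℝ) :
    HasDerivAt (fun s : ℝ => (1 - s) ^ a * (1 + s) ^ b)
      (-(a : ℝ) * ((1 - t) ^ (a - 1) * (1 + t) ^ b)
        + (b : ℝ) * ((1 - t) ^ a * (1 + t) ^ (b - 1))) t := by
  have := (hA a t).fun_mul (hB b t)
  exact this.congr_deriv (by ring)


lemma key2 (m : ℕ) (τ : ℝ) :
    (1 - τ ^ 2) * deriv (deriv (fun t : ℝ => (1 - t) ^ (m + 6) * (1 + t) ^ (m + 2))) τ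
      + (4 + 2 * ((m : ℝ) + 3) * τ) * deriv (fun t : ℝ => (1 - t) ^ (m + 6) * (1 + t) ^ (m + 2)) τ
      + 2 * ((m : ℝ) + 4) * ((1 - τ) ^ (m + 6) * (1 + τ) ^ (m + 2)) = 0 := by
  have hf' : deriv (fun t : ℝ => (1 - t) ^ (m + 6) * (1 + t) ^ (m + 2))
      = fun t : ℝ => (-(m : ℝ) - 6) * ((1 - t) ^ (m + 5) * (1 + t) ^ (m + 2))
          + ((m : ℝ) + 2) * ((1 - t) ^ (m + 6) * (1 + t) ^ (m + 1)) := by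
    funext t
    rw [(hf (m + 6) (m + 2) t).deriv]
    simp only [show m + 6 - 1 = m + 5 from rfl, show m + 2 - 1 = m + 1 from rfl]
    push_cast
    ring
  have h2 := ((HasDerivAt.const_mul ((-(m : ℝ) - 6)) (hf (m + 5) (m + 2) τ)).fun_add
    (HasDerivAt.const_mul ((m : ℝ) + 2) (hf (m + 6) (m + 1) τ))).deriv
  rw [hf', h2]
  simp only [show m + 6 - 1 = m + 5 from rfl, show m + 5 - 1 = m + 4 from rfl,
    show m + 2 - 1 = m + 1 from rfl, show m + 1 - 1 = m from rfl]
  push_cast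
  ring

lemma key0 (τ : ℝ) :
    (1 - τ ^ 2) * deriv (deriv (fun t : ℝ => (1 - t) ^ 4 * (1 + t) ^ 0)) τ
      + (4 + 2 * (1 : ℝ) * τ) * deriv (fun t : ℝ => (1 - t) ^ 4 * (1 + t) ^ 0) τ
      + 2 * (2 : ℝ) * ((1 - τ) ^ 4 * (1 + τ) ^ 0) = 0 := by
  have hf' : deriv (fun t : ℝ => (1 - t) ^ 4 * (1 + t) ^ 0)
      = fun t : ℝ => (-4 : ℝ) * ((1 - t) ^ 3 * (1 + t) ^ 0) := by
    funext t
    rw [(hf 4 0 t).deriv]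
    norm_num
  have h2 := (HasDerivAt.const_mul ((-4 : ℝ)) (hf 3 0 τ)).deriv
  rw [hf', h2]
  norm_num
  ring

lemma key1 (τ : ℝ) :
    (1 - τ ^ 2) * deriv (deriv (fun t : ℝ => (1 - t) ^ 5 * (1 + t) ^ 1)) τ
      + (4 + 2 * (2 : ℝ) * τ) * deriv (fun t : ℝ => (1 - t) ^ 5 * (1 + t) ^ 1) τ
      + 2 * (3 : ℝ) * ((1 - τ) ^ 5 * (1 + τ) ^ 1) = 0 := by
  have hf' : deriv (fun t : ℝ => (1 - t) ^ 5 * (1 + t) ^ 1)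
      = fun t : ℝ => (-5 : ℝ) * ((1 - t) ^ 4 * (1 + t) ^ 1)
          + (1 : ℝ) * ((1 - t) ^ 5 * (1 + t) ^ 0) := by
    funext t
    rw [(hf 5 1 t).deriv]
    norm_num
  have h2 := ((HasDerivAt.const_mul ((-5 : ℝ)) (hf 4 1 τ)).fun_add
    (HasDerivAt.const_mul ((1 : ℝ)) (hf 5 0 τ))).deriv
  rw [hf', h2]
  norm_num
  ring

set_option maxRecDepth 10000 in
theorem stmt_0 (p : ℕ) (hp : 2 ≤ p) :
    ∀ τ : ℝ,
      (1 - τ ^ 2) * deriv (deriv (fun t : ℝ => (1 - t) ^ (p + 2) * (1 + t) ^ (p - 2))) τ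
        + (4 + 2 * ((p : ℝ) - 1) * τ) *
            deriv (fun t : ℝ => (1 - t) ^ (p + 2) * (1 + t) ^ (p - 2)) τ
        + 2 * (p : ℝ) * ((1 - τ) ^ (p + 2) * (1 + τ) ^ (p - 2)) = 0 := by
  obtain ⟨k, rfl⟩ : ∃ k, p = k + 2 := ⟨p - 2, by omega⟩
  intro τ
  simp only [Nat.add_sub_cancel]
  rcases k with _ | _ | m
  · norm_num only
    linear_combination key0 τ
  · norm_num only
    linear_combination key1 τ
  · rw [show m + 1 + 1 + 2 + 2 = m + 6 by omega, show m + 1 + 1 = m + 2 by omega]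
    push_cast
    linear_combination key2 m τ
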